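/- Every clean commutative ring has stable range 1. -/

import Mathlib

def HasStableRange1 (R : Type*) [CommRing R] : Prop :=
  ∀ a b : R, Ideal.span {a, b} = ⊤ → ∃ t : R, IsUnit (a + b * t)

/-- A clean ring: every element is a sum of a unit and an idempotent. -/
def IsCleanRing (R : Type*) [CommRing R] : Prop :=
  ∀ a : R, ∃ u e : R, IsUnit u ∧ IsIdempotentElem e ∧ a = u + e

theorem stmt18 {R : Type*} [CommRing R] (h : IsCleanRing R) :
    HasStableRange1 R := by
  intro a b hspan
  have h1 : (1 : R) ∈ Ideal.span {a, b} := by rw [hspan]; trivial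
  rw [Ideal.mem_span_pair] at h1
  obtain ⟨x, y, hxy⟩ := h1
  obtain ⟨u, f, hu, hf, hc⟩ := h (a * x)
  obtain ⟨v, hv⟩ := hu.exists_right_inv
  have hf' : f * f = f := hf
  refine ⟨y * (-(f * v)) * (f - a), IsUnit.of_mul_eq_one (x * (1 - f) * v * (1 - f) + f) ?_⟩
  have ht : b * (y * (-(f * v)) * (f - a)) = f - f * a := by
    linear_combination ((-(f * v)) * (f - a)) * hxy + ((f * v) * (f - a)) * hc
      + (v * (f - a) + 1) * hf' + (f * (f - a)) * hv
  rw [ht]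
  linear_combination (v * (1 - f)) * hc + (1 - f) * hv
    + (a * x * v * (2 - f) - a - x * v * (1 - f) + 1 - v) * hf'
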